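/- Exact preservation of the discrete ground state by the fully discrete scheme: fix h > 0, an integer K ≥ 0, λ_h > 0 and τ > 0 with τ·λ_h < 1. Suppose η_h ∈ ℝ^ℤ satisfies η_h^ℓ = 0 for |ℓ| > K, the discrete Euler–Lagrange equation (1/2)·(Δ_h η_h)^ℓ + (η_h^ℓ)³ = λ_h·η_h^ℓ for all |ℓ| ≤ K, and N_h(η_h) = 1. Then ψ* := (1 − τλ_h)^{−1}·η_h satisfies ψ*^ℓ = η_h^ℓ + τ·( (1/2)·(Δ_h ψ*)^ℓ + (η_h^ℓ)²·ψ*^ℓ ) for all |ℓ| ≤ K and ψ*^ℓ = 0 for |ℓ| > K, and ψ*/√(N_h(ψ*)) = η_h; i.e. the fully discrete linearly implicit step followed by normalization fixes η_h. -/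
import Mathlib


/-- Discrete Laplacian with mesh `h`: `(Δ_h φ)^ℓ = (φ^{ℓ+1} + φ^{ℓ−1} − 2φ^ℓ)/h²`. -/
noncomputable def dLap (h : ℝ) (φ : ℤ → ℝ) (ℓ : ℤ) : ℝ :=
  (φ (ℓ + 1) + φ (ℓ - 1) - 2 * φ ℓ) / h^2

/-- Squared discrete `L²` norm: `N_h(φ) = h ∑_j (φ^j)²`. -/
noncomputable def Nh (h : ℝ) (φ : ℤ → ℝ) : ℝ := h * ∑' j : ℤ, (φ j)^2

/-- exact preservation of the discrete ground state by the fully discrete scheme: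
if `η_h` solves the discrete Euler–Lagrange equation with multiplier `λ_h` and `N_h(η_h) = 1`,
and `τλ_h < 1`, then `ψ* = (1 − τλ_h)⁻¹ η_h` solves the fully discrete linearly implicit step
with data `η_h`, and its normalization is `η_h` again. -/
theorem fully_discrete_scheme_preserves_ground_state
    (h : ℝ) (hh : 0 < h) (K : ℕ) (lamh τ : ℝ) (hlam : 0 < lamh) (hτ0 : 0 < τ)
    (hτlam : τ * lamh < 1)
    (ηh : ℤ → ℝ)
    (hout : ∀ ℓ : ℤ, (K : ℤ) < |ℓ| → ηh ℓ = 0)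
    (hEL : ∀ ℓ : ℤ, |ℓ| ≤ (K : ℤ) →
      (1/2) * dLap h ηh ℓ + (ηh ℓ)^3 = lamh * ηh ℓ)
    (hnorm : Nh h ηh = 1) :
    (∀ ℓ : ℤ, |ℓ| ≤ (K : ℤ) →
      (1 - τ * lamh)⁻¹ * ηh ℓ =
        ηh ℓ + τ * ((1/2) * dLap h (fun j => (1 - τ * lamh)⁻¹ * ηh j) ℓ +
          (ηh ℓ)^2 * ((1 - τ * lamh)⁻¹ * ηh ℓ))) ∧
    (∀ ℓ : ℤ, (K : ℤ) < |ℓ| → (1 - τ * lamh)⁻¹ * ηh ℓ = 0) ∧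
    (fun ℓ => (1 - τ * lamh)⁻¹ * ηh ℓ /
      Real.sqrt (Nh h (fun j => (1 - τ * lamh)⁻¹ * ηh j))) = ηh := by
  set c : ℝ := (1 - τ * lamh)⁻¹ with hc
  have h1 : 0 < 1 - τ * lamh := by linarith
  have hc0 : 0 < c := inv_pos.mpr h1
  have hcid : c * (1 - τ * lamh) = 1 := inv_mul_cancel₀ (ne_of_gt h1)
  have hlap : ∀ ℓ, dLap h (fun j => c * ηh j) ℓ = c * dLap h ηh ℓ := by
    intro ℓ; simp only [dLap]; ring
  refine ⟨?_, ?_, ?_⟩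
  · intro ℓ hℓ
    have e := hEL ℓ hℓ
    rw [hlap]
    have : (1/2) * dLap h ηh ℓ = lamh * ηh ℓ - (ηh ℓ)^3 := by linarith
    have expand : ηh ℓ + τ * (c * ((1/2) * dLap h ηh ℓ) + (ηh ℓ)^2 * (c * ηh ℓ))
        = ηh ℓ + τ * c * lamh * ηh ℓ := by
      rw [this]; ring
    calc c * ηh ℓ = (c * (1 - τ * lamh) + τ * c * lamh) * ηh ℓ := by ring
      _ = ηh ℓ + τ * c * lamh * ηh ℓ := by rw [hcid]; ring
      _ = ηh ℓ + τ * ((1/2) * (c * dLap h ηh ℓ) + (ηh ℓ)^2 * (c * ηh ℓ)) := by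
          rw [expand.symm]; ring_nf
  · intro ℓ hℓ; rw [hout ℓ hℓ, mul_zero]
  · have hN : Nh h (fun j => c * ηh j) = c ^ 2 := by
      have : ∀ j : ℤ, (c * ηh j)^2 = c^2 * (ηh j)^2 := fun j => by ring
      simp only [Nh, this, tsum_mul_left]
      have := hnorm
      simp only [Nh] at this
      nlinarith [this]
    rw [hN, Real.sqrt_sq hc0.le]
    funext ℓ
    field_simp
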